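/- There exists a constant C > 0, depending only on δ, such that if g is an isometry of a δ-hyperbolic geodesic space X with basepoint x_0 which is a product of isometries g = g₁ g₂ ⋯ g_n satisfying d(x_0, g_i x_0) ≥ (g_{i−1}^{−1} x_0 | g_i x_0)_{x_0} + (g_i^{−1} x_0 | g_{i+1} x_0)_{x_0} + C for all i (with cyclic index conventions g_{n+1} = g₁ and g₀ = g_n), then the translation length of g satisfies τ(g) ≥ Σ_{i=1}^n ( d(x_0, g_i x_0) − (g_{i−1}^{−1} x_0 | g_i x_0)_{x_0} − (g_i^{−1} x_0 | g_{i+1} x_0)_{x_0} − C ); in particular g is hyperbolic. Furthermore, any geodesic from x_0 to g x_0, and any axis of g, passes within distance (g_{i−1}^{−1} x_0 | g_i x_0)_{x_0} + (g_i^{−1} x_0 | g_{i+1} x_0)_{x_0} + C of each point g₁ ⋯ g_i x_0. -/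

import Mathlib

open MeasureTheory ProbabilityTheory Filter Metric Set Pointwise

noncomputable section

namespace RandomSubgroups

variable {G : Type*} [Group G] {X : Type*} [MetricSpace X]

/-- The Gromov product `(x|y)_w`. -/
def gp (w x y : X) : ℝ := (dist w x + dist w y - dist x y) / 2

/-- `γ` is a unit-speed geodesic from `x` to `y`, parametrized on `[0, dist x y]`. -/
def IsGeodesicFrom (γ : ℝ → X) (x y : X) : Prop :=
  γ 0 = x ∧ γ (dist x y) = y ∧
    ∀ s ∈ Icc (0 : ℝ) (dist x y), ∀ t ∈ Icc (0 : ℝ) (dist x y),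
      dist (γ s) (γ t) = |s - t|

/-- `X` is a geodesic space. -/
def GeodesicSpace (X : Type*) [MetricSpace X] : Prop :=
  ∀ x y : X, ∃ γ : ℝ → X, IsGeodesicFrom γ x y

/-- All geodesic triangles in `X` are δ-slim: each side is contained in the
δ-neighbourhood of the union of the other two sides. -/
def SlimTriangles (X : Type*) [MetricSpace X] (δ : ℝ) : Prop :=
  ∀ x y z : X, ∀ γ₁ γ₂ γ₃ : ℝ → X,
    IsGeodesicFrom γ₁ x y → IsGeodesicFrom γ₂ y z → IsGeodesicFrom γ₃ x z →
      ∀ t ∈ Icc (0 : ℝ) (dist x z),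
        ∃ u ∈ γ₁ '' Icc (0 : ℝ) (dist x y) ∪ γ₂ '' Icc (0 : ℝ) (dist y z),
          dist (γ₃ t) u ≤ δ

/-- A δ-hyperbolic geodesic metric space. -/
def DeltaHyperbolic (X : Type*) [MetricSpace X] (δ : ℝ) : Prop :=
  0 ≤ δ ∧ GeodesicSpace X ∧ SlimTriangles X δ

/-- The group `G` acts on `X` by isometries. -/
def IsometricAction (G : Type*) (X : Type*) [Group G] [MetricSpace X] [MulAction G X] : Prop :=
  ∀ g : G, Isometry fun x : X => g • x

/-- The action of `G` on `X` is acylindrical. -/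
def AcylindricalAction (G : Type*) (X : Type*) [Group G] [MetricSpace X] [MulAction G X] : Prop :=
  ∀ K : ℝ, 0 ≤ K → ∃ R : ℝ, ∃ N : ℕ, ∀ x y : X, R ≤ dist x y →
    {g : G | dist x (g • x) ≤ K ∧ dist y (g • y) ≤ K}.Finite ∧
      Nat.card {g : G | dist x (g • x) ≤ K ∧ dist y (g • y) ≤ K} ≤ N

variable [MulAction G X]

/-- `g` has translation length `τ` (independent of the basepoint `x₀`). -/
def HasTranslationLength (g : G) (x₀ : X) (τ : ℝ) : Prop :=
  Tendsto (fun m : ℕ => dist x₀ ((g ^ m) • x₀) / m) atTop (nhds τ)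

/-- A hyperbolic (loxodromic) element: one with positive translation length. -/
def IsHyperbolicElt (g : G) (x₀ : X) : Prop := ∃ τ : ℝ, 0 < τ ∧ HasTranslationLength g x₀ τ

/-- Two hyperbolic elements with disjoint pairs of fixed points in the Gromov boundary,
expressed via uniformly bounded Gromov products between the two (quasigeodesic) orbits. -/
def IndependentHyperbolic (g h : G) (x₀ : X) : Prop :=
  IsHyperbolicElt g x₀ ∧ IsHyperbolicElt h x₀ ∧
    ∃ C : ℝ, ∀ n m : ℤ, gp x₀ ((g ^ n) • x₀) ((h ^ m) • x₀) ≤ C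

/-- A subgroup is non-elementary if it contains two independent hyperbolic elements. -/
def NonelementarySub (H : Subgroup G) (x₀ : X) : Prop :=
  ∃ g ∈ H, ∃ h ∈ H, IndependentHyperbolic g h x₀

/-- `G` acts acylindrically hyperbolically on `X`, with hyperbolicity constant `δ`
and basepoint `x₀`. -/
structure AcylHypAction (G : Type*) (X : Type*) [Group G] [MetricSpace X] [MulAction G X]
    (δ : ℝ) (x₀ : X) : Prop where
  isom : IsometricAction G X
  hyp : DeltaHyperbolic X δ
  acyl : AcylindricalAction G X
  nonelem : NonelementarySub (⊤ : Subgroup G) x₀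

/-- `N` is the maximal finite normal subgroup `E(G)` of `G`. -/
def IsEG (N : Subgroup G) : Prop :=
  (N : Set G).Finite ∧ N.Normal ∧ ∀ M : Subgroup G, (M : Set G).Finite → M.Normal → M ≤ N

/-- A virtually cyclic subgroup: contains a cyclic subgroup of finite index. -/
def IsVirtuallyCyclic (H : Subgroup G) : Prop :=
  ∃ c : G, Subgroup.zpowers c ≤ H ∧ (Subgroup.zpowers c).relIndex H ≠ 0

/-- `E` is the maximal virtually cyclic subgroup `E(g)` containing `g`. -/
def IsEg (g : G) (E : Subgroup G) : Prop :=
  g ∈ E ∧ IsVirtuallyCyclic E ∧ ∀ E' : Subgroup G, g ∈ E' → IsVirtuallyCyclic E' → E' ≤ E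

/-- `g` is weakly asymmetric: it is hyperbolic and `E(g) = ⟨g⟩ ⋉ E(G)`
(note `⟨g⟩ ⊔ E(G) = ⟨g⟩ E(G)` as `E(G)` is normal, and the extension splits automatically
since a hyperbolic element has infinite order). -/
def WeaklyAsymmetric (g : G) (x₀ : X) (EG : Subgroup G) : Prop :=
  IsHyperbolicElt g x₀ ∧ IsEg g (Subgroup.zpowers g ⊔ EG)

/-- A bi-infinite `(1, O(δ))`-quasigeodesic which is an axis for `g`: it is coarsely
translated by `g` by its translation length (equivalently, it connects the two fixed
points of `g` in the Gromov boundary). -/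
def IsAxis (δ : ℝ) (g : G) (x₀ : X) (α : ℝ → X) : Prop :=
  (∀ s t : ℝ, |s - t| - 100 * (δ + 1) ≤ dist (α s) (α t) ∧
      dist (α s) (α t) ≤ |s - t| + 100 * (δ + 1)) ∧
    ∃ τ : ℝ, 0 < τ ∧ HasTranslationLength g x₀ τ ∧
      ∃ C : ℝ, ∀ t : ℝ, dist (g • α t) (α (t + τ)) ≤ C

/-- `p` is a closest point to `x` on (the image of) `α`. -/
def IsClosestPointOn (α : ℝ → X) (x p : X) : Prop :=
  p ∈ Set.range α ∧ ∀ q ∈ Set.range α, dist x p ≤ dist x q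

/-- `p` is a closest point to `x` on the geodesic segment `γ` from `a` to `b`. -/
def IsClosestPointOnSeg (γ : ℝ → X) (a b x p : X) : Prop :=
  p ∈ γ '' Icc (0 : ℝ) (dist a b) ∧ ∀ q ∈ γ '' Icc (0 : ℝ) (dist a b), dist x p ≤ dist x q

/-- The `K`-stabilizer of the geodesic `[p, q]`. -/
def KStab (K : ℝ) (p q : X) : Set G := {g : G | dist p (g • p) ≤ K ∧ dist q (g • q) ≤ K}

/-- `g` is `K`-asymmetric: `g` is hyperbolic with axis `α`, and for `p` a closest point
on `α` to the basepoint `x₀`, the `K`-stabilizer of `[p, g p]` equals `E(G)`. -/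
def KAsymmetric (δ K : ℝ) (g : G) (x₀ : X) (EG : Subgroup G) : Prop :=
  IsHyperbolicElt g x₀ ∧ ∃ α : ℝ → X, IsAxis δ g x₀ α ∧
    ∀ p : X, IsClosestPointOn α x₀ p → KStab K p (g • p) = (EG : Set G)

/-- `g` is `K`-primitive: with `P` the set of projections of the points `g^i x₀` to an
axis of `g`, every element of `E(g)` moves `P` Hausdorff distance at most `K`. -/
def KPrimitive (δ K : ℝ) (g : G) (x₀ : X) : Prop :=
  ∃ α : ℝ → X, IsAxis δ g x₀ α ∧
    ∀ p : ℤ → X, (∀ i : ℤ, IsClosestPointOn α ((g ^ i) • x₀) (p i)) →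
      ∀ E : Subgroup G, IsEg g E → ∀ h ∈ E,
        hausdorffDist (Set.range p) ((fun x : X => h • x) '' Set.range p) ≤ K

/-- `h` switches the two fixed points of the hyperbolic element `g` in the boundary,
expressed via Gromov products along the orbit of `g` going to infinity. -/
def SwitchesEndpoints (g h : G) (x₀ : X) : Prop :=
  Tendsto (fun n : ℕ => gp x₀ ((g ^ (n : ℤ)) • x₀) (h • ((g ^ (-(n : ℤ))) • x₀)))
    atTop atTop ∧
  Tendsto (fun n : ℕ => gp x₀ ((g ^ (-(n : ℤ))) • x₀) (h • ((g ^ (n : ℤ)) • x₀)))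
    atTop atTop

/-- `g` is irreversible: no element of `E(g)` switches its two fixed points at infinity. -/
def Irreversible (g : G) (x₀ : X) : Prop :=
  ∀ E : Subgroup G, IsEg g E → ∀ h ∈ E, ¬ SwitchesEndpoints g h x₀

/-- The support of a measure on a countable discrete group. -/
def suppSet [MeasurableSpace G] (μ : Measure G) : Set G := {g : G | μ {g} ≠ 0}

/-- An admissible probability distribution: its support generates a non-elementary
subgroup containing a weakly asymmetric element, and the support has bounded image in `X`. -/
def Admissible [MeasurableSpace G] (μ : Measure G) (x₀ : X) (EG : Subgroup G) : Prop :=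
  IsProbabilityMeasure μ ∧
  NonelementarySub (Subgroup.closure (suppSet μ)) x₀ ∧
  (∃ g ∈ Subgroup.closure (suppSet μ), WeaklyAsymmetric g x₀ EG) ∧
  Bornology.IsBounded ((fun g : G => g • x₀) '' suppSet μ)

/-- The position of the random walk with steps `s` at time `n`:
`w_n = s_0 s_1 ⋯ s_{n-1}`. -/
def walk {Ω : Type*} (s : ℕ → Ω → G) (n : ℕ) (ω : Ω) : G :=
  ((List.range n).map fun i => s i ω).prod

/-- The steps `s` form a `μ`-random walk on the probability space `(Ω, P)`:
they are independent and identically `μ`-distributed. -/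
def IsRandomWalk {Ω : Type*} [MeasurableSpace Ω] [MeasurableSpace G]
    (P : Measure Ω) (μ : Measure G) (s : ℕ → Ω → G) : Prop :=
  IsProbabilityMeasure P ∧ (∀ i, Measurable (s i)) ∧
    iIndepFun (m := fun _ => ‹MeasurableSpace G›) s P ∧ ∀ i, Measure.map (s i) P = μ

/-- Finitely many jointly independent random walks, with step distributions `μ i`. -/
def AreRandomWalks {Ω : Type*} [MeasurableSpace Ω] [MeasurableSpace G] {k : ℕ}
    (P : Measure Ω) (μ : Fin k → Measure G) (s : Fin k → ℕ → Ω → G) : Prop :=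
  IsProbabilityMeasure P ∧ (∀ i j, Measurable (s i j)) ∧
    iIndepFun (m := fun _ : Fin k × ℕ => ‹MeasurableSpace G›) (fun p => s p.1 p.2) P ∧
    ∀ i j, Measure.map (s i j) P = μ i

/-- `L` is the (almost sure) drift of the random walk with steps `s`. -/
def IsDrift {Ω : Type*} [MeasurableSpace Ω] (P : Measure Ω) (s : ℕ → Ω → G)
    (x₀ : X) (L : ℝ) : Prop :=
  ∀ᵐ ω ∂P, Tendsto (fun n : ℕ => dist x₀ (walk s n ω • x₀) / n) atTop (nhds L)

/-- The paths `γ`, `γ'`, restricted to the parameter sets `I`, `I'`, have an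
`(A,B)`-match: subsegments of length at least `A` of each, such that some `G`-translate
of the first is at Hausdorff distance at most `B` from the second. -/
def HasMatch (G : Type*) [Group G] [MulAction G X] (γ γ' : ℝ → X) (I I' : Set ℝ)
    (A B : ℝ) : Prop :=
  ∃ a b a' b' : ℝ, Icc a b ⊆ I ∧ Icc a' b' ⊆ I' ∧ A ≤ b - a ∧ A ≤ b' - a' ∧
    ∃ g : G, hausdorffDist ((fun x : X => g • x) '' (γ '' Icc a b)) (γ' '' Icc a' b') ≤ B

/-- A subgroup `H` is geometrically separated in `X`. -/
def GeomSeparated (G : Type*) (X : Type*) [Group G] [MetricSpace X] [MulAction G X]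
    (H : Subgroup G) : Prop :=
  ∀ (x₀ : X) (R : ℝ), 0 ≤ R → ∃ B : ℝ, ∀ g : G, g ∉ H →
    Metric.diam ({x : X | ∃ h ∈ H, dist x ((g * h) • x₀) ≤ R} ∩
      {x : X | ∃ h ∈ H, dist x (h • x₀) ≤ R}) ≤ B

/-- Word length of `g` over the symmetrized alphabet `S`. -/
def wordLength (S : Set G) (g : G) : ℕ :=
  sInf {m : ℕ | ∃ f : Fin m → G, (∀ i, f i ∈ S ∨ (f i)⁻¹ ∈ S) ∧ g = (List.ofFn f).prod}

/-- Word distance over the alphabet `S`. -/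
def wordDist (S : Set G) (g h : G) : ℕ := wordLength S (g⁻¹ * h)

/-- Gromov product for the word metric over `S`. -/
def gpWord (S : Set G) (w x y : G) : ℝ :=
  ((wordDist S w x : ℝ) + (wordDist S w y : ℝ) - (wordDist S x y : ℝ)) / 2

/-- Gromov hyperbolicity of the word metric on `G` over the alphabet `S`, in the
four-point formulation. -/
def WordHyperbolic (S : Set G) (δ : ℝ) : Prop :=
  ∀ w x y z : G, min (gpWord S w x z) (gpWord S w z y) - δ ≤ gpWord S w x y

/-- `h'` is reachable from `h` in at most `m` steps in `Cay(G, Y ⊔ H)` by an admissible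
path, i.e. one containing no edge of `Cay(H, H)` (an `H`-labelled edge starting in `H`). -/
def RelReachable (Y : Set G) (H : Subgroup G) (h h' : G) (m : ℕ) : Prop :=
  ∃ p : ℕ → G, p 0 = h ∧ p m = h' ∧ ∀ i < m, ∃ a : G,
    p (i + 1) = p i * a ∧ ((a ∈ Y ∨ a⁻¹ ∈ Y) ∨ (a ∈ H ∧ p i ∉ H))

/-- `H` is hyperbolically embedded in `G` with respect to the generating set `Y`:
`Cay(G, Y ⊔ H)` is hyperbolic and the relative metric `d̂_H` on `H` is proper. -/
def HypEmbeddedWrt (H : Subgroup G) (Y : Set G) : Prop :=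
  Subgroup.closure Y = (⊤ : Subgroup G) ∧
  (∃ δ : ℝ, 0 ≤ δ ∧ WordHyperbolic (Y ∪ (H : Set G)) δ) ∧
  ∀ r : ℕ, {x : G | x ∈ H ∧ ∃ m ≤ r, RelReachable Y H 1 x m}.Finite

/-- `H` is hyperbolically embedded in `G` (with respect to some generating set). -/
def HypEmbedded (H : Subgroup G) : Prop := ∃ Y : Set G, HypEmbeddedWrt H Y

/-- `G` is an acylindrically hyperbolic group. -/
def AcylindricallyHyperbolic (G : Type*) [Group G] : Prop :=
  ∃ (X : Type) (_ : MetricSpace X) (_ : MulAction G X) (δ : ℝ) (x₀ : X),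
    AcylHypAction G X δ x₀

/-- The subgroup `H E(G) = {he : h ∈ H, e ∈ E(G)}` is the (internal) semidirect product
`H ⋉ E(G)`: every element factors uniquely as `h * e`. -/
def IsInternalSemidirect (H EG : Subgroup G) : Prop :=
  (((H : Set G) * (EG : Set G)) = ((H ⊔ EG : Subgroup G) : Set G)) ∧
  ∀ h ∈ H, ∀ h' ∈ H, ∀ e ∈ EG, ∀ e' ∈ EG, h * e = h' * e' → h = h' ∧ e = e'

/-- Rescaled length on the free group on `Fin k`: the generator `i` gets length
`dist x₀ (a i • x₀)`; the distance between vertices `u, v` of the rescaled Cayley graph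
`Γ_H` (a tree) is `rescaledLength (u⁻¹ * v)`. -/
def rescaledLength {k : ℕ} (a : Fin k → G) (x₀ : X) (u : FreeGroup (Fin k)) : ℝ :=
  ((FreeGroup.toWord u).map fun p => dist x₀ (a p.1 • x₀)).sum


/-- `ε`-length bounds for a family of elements with drift parameters `L i` and
lengths `n i`. -/
def LengthBounds (x₀ : X) {k : ℕ} (w : Fin k → G) (L : Fin k → ℝ) (n : Fin k → ℕ)
    (ε : ℝ) : Prop :=
  ∀ i, (1 - ε) * L i * (n i : ℝ) ≤ dist x₀ (w i • x₀) ∧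
    dist x₀ (w i • x₀) ≤ (1 + ε) * L i * (n i : ℝ)

/-- The symmetric generating set `{w i, (w i)⁻¹}`. -/
def symSet {k : ℕ} (w : Fin k → G) : Set G :=
  Set.range w ∪ (fun g : G => g⁻¹) '' Set.range w

/-- `K`-Gromov product bounds for the symmetric generating set of `w`. -/
def GromovBounds (x₀ : X) {k : ℕ} (w : Fin k → G) (K : ℝ) : Prop :=
  ∀ a ∈ symSet w, ∀ b ∈ symSet w, a ≠ b → gp x₀ (a • x₀) (b • x₀) ≤ K

/-- The family has an `M`-large match (here `M = εLn`): for some `i < j`, a `G`-translate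
of the subgeodesic `[γ_j(M), γ_j(‖γ_j‖ - M)]` is contained in a `2δ`-neighbourhood
of `γ_i`, where `γ_l` is a geodesic from `x₀` to `w l • x₀`. -/
def HasLargeMatchElems (δ : ℝ) (x₀ : X) {k : ℕ} (w : Fin k → G) (M : ℝ) : Prop :=
  ∃ i j : Fin k, i < j ∧ ∃ γi γj : ℝ → X,
    IsGeodesicFrom γi x₀ (w i • x₀) ∧ IsGeodesicFrom γj x₀ (w j • x₀) ∧
    ∃ g : G, ∀ t ∈ Icc M (dist x₀ (w j • x₀) - M),
      ∃ u ∈ γi '' Icc (0 : ℝ) (dist x₀ (w i • x₀)), dist (g • γj t) u ≤ 2 * δ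

/-- A signed generator: `(i, true) ↦ w i` and `(i, false) ↦ (w i)⁻¹`. -/
def signedElem {k : ℕ} (w : Fin k → G) (σ : Fin k × Bool) : G :=
  if σ.2 then w σ.1 else (w σ.1)⁻¹

/-- The family is `K`-unmatched: for all signed indices `i, i'` with `i ≤ j`, `i' ≤ j`,
`i ≠ -i'`, integers `0 ≤ ℓ ≤ ‖γ_i‖` and `0 ≤ t ≤ K`, no geodesic `η(i, i', K, ℓ)` — from
the point of `γ_i` at distance `ℓ` from its endpoint `w_i x₀` to the point of
`w_i γ_{i'}` at distance `K` from `w_i x₀` — is contained in a `2δ`-neighbourhood of a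
subgeodesic of `γ_j` starting at `γ_j(t)`. -/
def UnmatchedElems (δ : ℝ) (x₀ : X) {k : ℕ} (w : Fin k → G) (K : ℝ) : Prop :=
  ∀ σ σ' : Fin k × Bool, ∀ j : Fin k, σ.1 ≤ j → σ'.1 ≤ j →
    ¬(σ.1 = σ'.1 ∧ σ.2 ≠ σ'.2) →
    ∀ γi γi' γj : ℝ → X,
      IsGeodesicFrom γi x₀ (signedElem w σ • x₀) →
      IsGeodesicFrom γi' x₀ (signedElem w σ' • x₀) →
      IsGeodesicFrom γj x₀ (w j • x₀) →
      ∀ ℓ : ℕ, (ℓ : ℝ) ≤ dist x₀ (signedElem w σ • x₀) →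
        K ≤ dist x₀ (signedElem w σ' • x₀) →
        ∀ η : ℝ → X,
          IsGeodesicFrom η (γi (dist x₀ (signedElem w σ • x₀) - (ℓ : ℝ)))
            (signedElem w σ • γi' K) →
          ∀ t : ℝ, 0 ≤ t → t ≤ K →
            ¬ ∃ u ∈ Icc t (dist x₀ (w j • x₀)),
              ∀ z ∈ η '' Icc (0 : ℝ)
                  (dist (γi (dist x₀ (signedElem w σ • x₀) - (ℓ : ℝ)))
                    (signedElem w σ • γi' K)),
                ∃ y ∈ γj '' Icc t u, dist z y ≤ 2 * δ

end RandomSubgroups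

open RandomSubgroups MeasureTheory Filter Set

namespace Stmt5Aux

variable {X : Type*} [MetricSpace X]

lemma gp_nonneg (w x y : X) : 0 ≤ gp w x y := by
  have h := dist_triangle x w y
  unfold gp
  rw [dist_comm x w] at h
  linarith

lemma gp_symm (w x y : X) : gp w x y = gp w y x := by
  unfold gp; rw [dist_comm x y]; ring_nf

lemma gp_le_dist (w x y : X) : gp w x y ≤ dist w x := by
  have := dist_triangle w x y
  have := dist_triangle x w y
  unfold gp
  have h := abs_dist_sub_le w y x
  rw [dist_comm y x] at *
  have := abs_le.1 h
  linarith [this.1, this.2]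

/-- `(x|y)_w + (w|y)_x = d(w,x)` -/
lemma gp_add (w x y : X) : gp w x y + gp x w y = dist w x := by
  unfold gp; rw [dist_comm x w]; ring

lemma gp_self (w y : X) : gp w w y = 0 := by
  unfold gp; simp

/-- L3: the Gromov product is a lower bound for the distance to a geodesic. -/
lemma gp_le_dist_geodesic {γ : ℝ → X} {x y : X} (hγ : IsGeodesicFrom γ x y)
    (w : X) {t : ℝ} (ht : t ∈ Icc (0:ℝ) (dist x y)) : gp w x y ≤ dist w (γ t) := by
  obtain ⟨h0, hL, hd⟩ := hγ
  have h0m : (0:ℝ) ∈ Icc (0:ℝ) (dist x y) := ⟨le_refl _, dist_nonneg⟩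
  have hLm : (dist x y) ∈ Icc (0:ℝ) (dist x y) := ⟨dist_nonneg, le_refl _⟩
  have hx : dist x (γ t) = t := by
    have := hd 0 h0m t ht; rw [h0] at this; rw [this, abs_of_nonpos (by linarith [ht.1])]
    linarith
  have hy : dist y (γ t) = dist x y - t := by
    have := hd (dist x y) hLm t ht; rw [hL] at this; rw [this, abs_of_nonneg (by linarith [ht.2])]
  have t1 := dist_triangle w (γ t) x
  have t2 := dist_triangle w (γ t) y
  rw [dist_comm (γ t) x] at t1
  rw [dist_comm (γ t) y] at t2
  unfold gp
  linarith

end Stmt5Aux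

namespace Stmt5Aux
variable {X : Type*} [MetricSpace X]

/-- L4: there is a point on any geodesic from x to y within `gp w x y + 2δ` of `w`. -/
lemma exists_geodesic_point_near {δ : ℝ} (geo : GeodesicSpace X) (slim : SlimTriangles X δ)
    {γ : ℝ → X} {x y : X} (hγ : IsGeodesicFrom γ x y) (w : X) :
    ∃ t ∈ Icc (0:ℝ) (dist x y), dist w (γ t) ≤ gp w x y + 2 * δ := by
  obtain ⟨γ₁, hγ₁⟩ := geo x w
  obtain ⟨γ₂, hγ₂⟩ := geo w y
  set t₁ : ℝ := gp x w y with ht₁def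
  have ht₁0 : 0 ≤ t₁ := gp_nonneg x w y
  have ht₁L : t₁ ≤ dist x y := by
    have h := gp_symm x w y ▸ gp_le_dist x y w
    have := gp_le_dist x y w
    rw [ht₁def, gp_symm]
    exact this
  have htm : t₁ ∈ Icc (0:ℝ) (dist x y) := ⟨ht₁0, ht₁L⟩
  obtain ⟨u, hu, hud⟩ := slim x w y γ₁ γ₂ γ hγ₁ hγ₂ hγ t₁ htm
  refine ⟨t₁, htm, ?_⟩
  rcases hu with ⟨s, hs, rfl⟩ | ⟨s, hs, rfl⟩
  · -- u on [x,w]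
    obtain ⟨h0, hL, hd⟩ := hγ₁
    have hxu : dist x (γ₁ s) = s := by
      have := hd 0 ⟨le_refl _, dist_nonneg⟩ s hs
      rw [h0] at this; rw [this, abs_of_nonpos (by linarith [hs.1])]; linarith
    have hwu : dist w (γ₁ s) = dist x w - s := by
      have := hd (dist x w) ⟨dist_nonneg, le_refl _⟩ s hs
      rw [hL] at this; rw [this, abs_of_nonneg (by linarith [hs.2])]
    have hxp : dist x (γ t₁) = t₁ := by
      obtain ⟨g0, gL, gd⟩ := hγ
      have := gd 0 ⟨le_refl _, dist_nonneg⟩ t₁ htm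
      rw [g0] at this; rw [this, abs_of_nonpos (by linarith)]; linarith
    have hs_ge : s ≥ t₁ - δ := by
      have h1 := dist_triangle x (γ₁ s) (γ t₁)
      rw [dist_comm (γ₁ s) (γ t₁)] at h1
      rw [hxu, hxp] at h1
      linarith
    have hfin : dist w (γ t₁) ≤ dist w (γ₁ s) + δ := by
      have h2 := dist_triangle w (γ₁ s) (γ t₁)
      rw [dist_comm (γ₁ s) (γ t₁)] at h2
      linarith
    rw [hwu] at hfin
    unfold gp at *
    linarith [dist_comm w x, dist_comm w y, dist_comm x y, dist_comm x w]
  · -- u on [w,y]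
    obtain ⟨h0, hL, hd⟩ := hγ₂
    have hwu : dist w (γ₂ s) = s := by
      have := hd 0 ⟨le_refl _, dist_nonneg⟩ s hs
      rw [h0] at this; rw [this, abs_of_nonpos (by linarith [hs.1])]; linarith
    have hyu : dist y (γ₂ s) = dist w y - s := by
      have h2 := hd (dist w y) ⟨dist_nonneg, le_refl _⟩ s hs
      rw [hL] at h2
      rw [h2, abs_of_nonneg (by linarith [hs.2])]
    have hyp : dist y (γ t₁) = dist x y - t₁ := by
      obtain ⟨g0, gL, gd⟩ := hγ
      have := gd (dist x y) ⟨dist_nonneg, le_refl _⟩ t₁ htm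
      rw [gL] at this; rw [this, abs_of_nonneg (by linarith)]
    have hs_le : s ≤ dist w y - (dist x y - t₁) + δ := by
      have h1 := dist_triangle y (γ₂ s) (γ t₁)
      rw [dist_comm (γ₂ s) (γ t₁)] at h1
      rw [hyp, hyu] at h1
      linarith
    have hfin : dist w (γ t₁) ≤ s + δ := by
      have h3 := dist_triangle w (γ₂ s) (γ t₁)
      rw [hwu, dist_comm (γ₂ s) (γ t₁)] at h3
      linarith
    unfold gp at *
    linarith [dist_comm w x, dist_comm w y, dist_comm x y, dist_comm x w]

/-- L5: four-point condition with constant `3δ`. -/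
lemma four_point {δ : ℝ} (geo : GeodesicSpace X) (slim : SlimTriangles X δ)
    (w x y z : X) : min (gp w x y) (gp w y z) - 3 * δ ≤ gp w x z := by
  obtain ⟨γ, hγ⟩ := geo x z
  obtain ⟨t, htm, htd⟩ := exists_geodesic_point_near geo slim hγ w
  obtain ⟨γ₁, hγ₁⟩ := geo x y
  obtain ⟨γ₂, hγ₂⟩ := geo y z
  obtain ⟨u, hu, hud⟩ := slim x y z γ₁ γ₂ γ hγ₁ hγ₂ hγ t htm
  have hwu : dist w u ≤ gp w x z + 3 * δ := by
    have := dist_triangle w (γ t) u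
    linarith
  rcases hu with ⟨s, hs, rfl⟩ | ⟨s, hs, rfl⟩
  · have := gp_le_dist_geodesic hγ₁ w hs
    calc min (gp w x y) (gp w y z) - 3*δ ≤ gp w x y - 3*δ := by
          linarith [min_le_left (gp w x y) (gp w y z)]
      _ ≤ dist w (γ₁ s) - 3*δ := by linarith
      _ ≤ gp w x z := by linarith
  · have := gp_le_dist_geodesic hγ₂ w hs
    calc min (gp w x y) (gp w y z) - 3*δ ≤ gp w y z - 3*δ := by
          linarith [min_le_right (gp w x y) (gp w y z)]
      _ ≤ dist w (γ₂ s) - 3*δ := by linarith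
      _ ≤ gp w x z := by linarith

end Stmt5Aux

namespace Stmt5Aux
variable {X : Type*} [MetricSpace X]

section Chain
variable {δ₄ : ℝ} (hδ₄ : 0 ≤ δ₄)
  (hyp4 : ∀ w x y z : X, min (gp w x y) (gp w y z) - δ₄ ≤ gp w x z)
  (z : ℕ → X) (q : ℕ → ℝ) (Cc : ℝ) (N : ℕ) (hCc : 3 * δ₄ + 1 ≤ Cc)
  (H1 : ∀ j, 1 ≤ j → j ≤ N → q (j - 1) + q j + Cc ≤ dist (z (j - 1)) (z j))
  (H2 : ∀ j, 1 ≤ j → j + 1 ≤ N → gp (z j) (z (j - 1)) (z (j + 1)) ≤ q j)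
  (H3 : ∀ j, 0 ≤ q j)

include hδ₄ hyp4 hCc H1 H2 H3

/-- C1: no-backtracking along the chain. -/
lemma chain_no_backtrack : ∀ j : ℕ, j + 1 ≤ N → gp (z j) (z 0) (z (j + 1)) ≤ q j + δ₄ := by
  intro j
  induction j with
  | zero => intro _; rw [gp_self]; linarith [H3 0]
  | succ j ih =>
    intro hjN
    have ihc := ih (by omega)
    have hid : gp (z (j+1)) (z 0) (z j) + gp (z j) (z 0) (z (j+1)) = dist (z (j+1)) (z j) := by
      unfold gp
      rw [dist_comm (z 0) (z j), dist_comm (z 0) (z (j+1)), dist_comm (z j) (z (j+1))]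
      ring
    have hH1 := H1 (j+1) (by omega) (by omega)
    simp only [Nat.add_sub_cancel] at hH1
    have hlow : q (j+1) + 2*δ₄ + 1 ≤ gp (z (j+1)) (z 0) (z j) := by
      have : dist (z j) (z (j+1)) = dist (z (j+1)) (z j) := dist_comm _ _
      linarith
    have h4 := hyp4 (z (j+1)) (z j) (z 0) (z (j+2))
    have hH2 := H2 (j+1) (by omega) (by omega)
    simp only [Nat.add_sub_cancel] at hH2
    have hsymm : gp (z (j+1)) (z j) (z 0) = gp (z (j+1)) (z 0) (z j) := gp_symm _ _ _
    rw [hsymm] at h4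
    have hq1 : gp (z (j+1)) (z j) (z (j+2)) ≤ q (j+1) := hH2
    rcases le_total (gp (z (j+1)) (z 0) (z j)) (gp (z (j+1)) (z 0) (z (j+2))) with hc | hc
    · rw [min_eq_left hc] at h4; linarith
    · rw [min_eq_right hc] at h4; linarith

/-- C2: linear progress. -/
lemma chain_progress : ∀ k : ℕ, k ≤ N →
    (∑ j ∈ Finset.range k, (dist (z j) (z (j + 1)) - 2 * q j - 2 * δ₄))
      ≤ dist (z 0) (z k) := by
  intro k
  induction k with
  | zero => intro _; simp
  | succ k ih =>
    intro hkN
    have ihc := ih (by omega)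
    rw [Finset.sum_range_succ]
    have hb := chain_no_backtrack hδ₄ hyp4 z q Cc N hCc H1 H2 H3 k (by omega)
    have hid : dist (z 0) (z (k+1))
        = dist (z 0) (z k) + dist (z k) (z (k+1)) - 2 * gp (z k) (z 0) (z (k+1)) := by
      unfold gp; rw [dist_comm (z k) (z 0)]; ring
    linarith

/-- C3: interior points have small Gromov product seen from the ends. -/
lemma chain_middle (i : ℕ) (hi1 : 1 ≤ i) (hiN : i + 1 ≤ N) :
    gp (z i) (z 0) (z N) ≤ q i + 2 * δ₄ := by
  have hrev : gp (z (i+1)) (z N) (z i) ≤ q (i+1) + δ₄ := by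
    set z' : ℕ → X := fun j => z (N - j) with hz'
    set q' : ℕ → ℝ := fun j => q (N - j) with hq'
    have H1' : ∀ j, 1 ≤ j → j ≤ N → q' (j - 1) + q' j + Cc ≤ dist (z' (j - 1)) (z' j) := by
      intro j hj hjN
      have hh := H1 (N - j + 1) (by omega) (by omega)
      simp only [hz', hq']
      have e1 : N - (j-1) = N - j + 1 := by omega
      rw [e1, dist_comm]
      have e2 : N - j + 1 - 1 = N - j := by omega
      rw [e2] at hh
      linarith
    have H2' : ∀ j, 1 ≤ j → j + 1 ≤ N → gp (z' j) (z' (j - 1)) (z' (j + 1)) ≤ q' j := by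
      intro j hj hjN
      simp only [hz', hq']
      have e1 : N - (j-1) = N - j + 1 := by omega
      have e2 : N - (j+1) = N - j - 1 := by omega
      rw [e1, e2]
      have hh := H2 (N - j) (by omega) (by omega)
      rw [gp_symm]
      exact hh
    have H3' : ∀ j, 0 ≤ q' j := fun j => H3 _
    have hb := chain_no_backtrack hδ₄ hyp4 z' q' Cc N hCc H1' H2' H3' (N - i - 1) (by omega)
    simp only [hz', hq'] at hb
    have e1 : N - (N - i - 1) = i + 1 := by omega
    have e2 : N - (N - i - 1 + 1) = i := by omega
    rw [e1, e2] at hb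
    have e3 : N - 0 = N := rfl
    rw [e3] at hb
    have e4 : q (N - (N - i - 1)) = q (i+1) := by rw [e1]
    linarith [hb, e4 ▸ hb]
  -- forward no-backtrack at i
  have hfwd : gp (z i) (z 0) (z (i + 1)) ≤ q i + δ₄ :=
    chain_no_backtrack hδ₄ hyp4 z q Cc N hCc H1 H2 H3 i (by omega)
  have hH1 := H1 (i+1) (by omega) (by omega)
  simp only [Nat.add_sub_cancel] at hH1
  -- (z_N | z_{i+1})_{z_i} = d(z_i, z_{i+1}) - (z_N | z_i)_{z_{i+1}}
  have hid : gp (z i) (z N) (z (i+1)) + gp (z (i+1)) (z N) (z i) = dist (z i) (z (i+1)) := by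
    unfold gp
    rw [dist_comm (z N) (z (i+1)), dist_comm (z N) (z i), dist_comm (z i) (z (i+1))]
    ring
  have hlow : q i + 2*δ₄ + 1 ≤ gp (z i) (z N) (z (i+1)) := by linarith
  have h4 := hyp4 (z i) (z 0) (z N) (z (i+1))
  rcases le_total (gp (z i) (z 0) (z N)) (gp (z i) (z N) (z (i+1))) with hc | hc
  · rw [min_eq_left hc] at h4
    -- gp (z i) (z 0) (z (i+1)) ≥ min - δ₄ ⇒ gp(z0,zN) ≤ gp(z0,z_{i+1}) + δ₄
    linarith
  · rw [min_eq_right hc] at h4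
    linarith

end Chain
end Stmt5Aux

namespace Stmt5Aux
variable {X : Type*} [MetricSpace X]

section Quasi
variable {δ c : ℝ} (hδ : 0 ≤ δ) (hc : 1 ≤ c)
  (geo : GeodesicSpace X) (slim : SlimTriangles X δ)

/-- quasi-geodesic map bounds -/
def QG (σ : ℝ → X) (c : ℝ) : Prop :=
  ∀ s t : ℝ, |s - t| - c ≤ dist (σ s) (σ t) ∧ dist (σ s) (σ t) ≤ |s - t| + c

lemma qg_gp {σ : ℝ → X} (hσ : QG σ c) {a b s : ℝ} (has : a ≤ s) (hsb : s ≤ b) :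
    gp (σ s) (σ a) (σ b) ≤ 3 * c / 2 := by
  have h1 := (hσ s a).2
  have h2 := (hσ s b).2
  have h3 := (hσ a b).1
  rw [abs_of_nonneg (by linarith)] at h1
  rw [abs_of_nonpos (by linarith)] at h2
  rw [abs_of_nonpos (by linarith)] at h3
  unfold gp
  linarith

include hδ hc geo slim

/-- M2: each point of a geodesic joining two points of a quasi-geodesic is near the
quasi-geodesic image. -/
lemma geodesic_near_qg {σ : ℝ → X} (hσ : QG σ c) {a b : ℝ} (hab : a ≤ b)
    {γ : ℝ → X} (hγ : IsGeodesicFrom γ (σ a) (σ b)) {t : ℝ}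
    (ht : t ∈ Icc (0:ℝ) (dist (σ a) (σ b))) :
    ∃ s ∈ Icc a b, dist (γ t) (σ s) ≤ 2 * (3 * c / 2 + 2 * δ) + c + 1 := by
  set L := dist (σ a) (σ b) with hL
  set S := {s | s ∈ Icc a b ∧ dist (σ a) (σ s) ≤ t} with hS
  have haS : a ∈ S := ⟨⟨le_refl _, hab⟩, by simp [ht.1]⟩
  have hSne : S.Nonempty := ⟨a, haS⟩
  have hSbdd : BddAbove S := ⟨b, fun s hs => hs.1.2⟩
  set s₁ := sSup S with hs₁
  have hs₁m : s₁ ∈ Icc a b := ⟨le_csSup hSbdd haS, csSup_le hSne (fun s hs => hs.1.2)⟩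
  -- find s₀ ∈ [a,b] with |d(σ a, σ s₀) - t| ≤ 1 + c
  have key : ∃ s₀ ∈ Icc a b, t - (1+c) ≤ dist (σ a) (σ s₀) ∧ dist (σ a) (σ s₀) ≤ t + (1+c) := by
    obtain ⟨s', hs'S, hs'lt⟩ := exists_lt_of_lt_csSup hSne (show s₁ - (1:ℝ)/2 < s₁ by linarith)
    rcases le_or_gt (s₁ + 1/2) b with hcase | hcase
    · refine ⟨s₁ + 1/2, ⟨by linarith [hs₁m.1], hcase⟩, ?_, ?_⟩
      · have hnotS : s₁ + 1/2 ∉ S := fun h => by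
          have := le_csSup hSbdd h; linarith
        have : ¬ (dist (σ a) (σ (s₁ + 1/2)) ≤ t) := fun h =>
          hnotS ⟨⟨by linarith [hs₁m.1], hcase⟩, h⟩
        linarith [not_le.1 this, hc]
      · have hd := (hσ s' (s₁ + 1/2)).2
        have : |s' - (s₁ + 1/2)| ≤ 1 := by
          rw [abs_le]; constructor <;> [linarith [le_csSup hSbdd hs'S]; linarith [le_csSup hSbdd hs'S]]
        have htri := dist_triangle (σ a) (σ s') (σ (s₁ + 1/2))
        have := hs'S.2
        linarith
    · refine ⟨b, ⟨hab, le_refl _⟩, ?_, ?_⟩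
      · have : t ≤ L := ht.2
        linarith [hc]
      · have hd := (hσ s' b).2
        have hsb' : s' ≤ b := hs'S.1.2
        have : |s' - b| ≤ 1 := by
          rw [abs_le]; constructor <;> try linarith [hs₁m.2]
        have htri := dist_triangle (σ a) (σ s') (σ b)
        have := hs'S.2
        linarith
  obtain ⟨s₀, hs₀m, hd1, hd2⟩ := key
  have hgp : gp (σ s₀) (σ a) (σ b) ≤ 3 * c / 2 := qg_gp hσ hs₀m.1 hs₀m.2
  obtain ⟨t', ht'm, ht'd⟩ := exists_geodesic_point_near geo slim hγ (σ s₀)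
  have ht'val : dist (σ a) (γ t') = t' := by
    obtain ⟨g0, gL, gd⟩ := hγ
    have := gd 0 ⟨le_refl _, dist_nonneg⟩ t' ht'm
    rw [g0] at this; rw [this, abs_of_nonpos (by linarith [ht'm.1])]; linarith
  have hM : dist (σ s₀) (γ t') ≤ 3 * c / 2 + 2 * δ := by linarith
  have htt' : |t - t'| ≤ (3 * c / 2 + 2 * δ) + (1 + c) := by
    have h1 := dist_triangle (σ a) (σ s₀) (γ t')
    have h2 := dist_triangle (σ a) (γ t') (σ s₀)
    rw [dist_comm (γ t') (σ s₀)] at h2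
    rw [ht'val] at h1 h2
    rw [abs_le]; constructor <;> linarith
  have hgeod : dist (γ t) (γ t') = |t - t'| := by
    obtain ⟨g0, gL, gd⟩ := hγ
    exact gd t ht t' ht'm
  refine ⟨s₀, hs₀m, ?_⟩
  have := dist_triangle (γ t) (γ t') (σ s₀)
  have habs := abs_le.1 htt'
  rw [dist_comm (γ t') (σ s₀)] at this
  calc dist (γ t) (σ s₀) ≤ dist (γ t) (γ t') + dist (σ s₀) (γ t') := this
    _ = |t - t'| + dist (σ s₀) (γ t') := by rw [hgeod]
    _ ≤ ((3 * c / 2 + 2 * δ) + (1 + c)) + (3 * c / 2 + 2 * δ) := by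
        have : |t - t'| ≤ (3 * c / 2 + 2 * δ) + (1 + c) := htt'
        linarith
    _ ≤ 2 * (3 * c / 2 + 2 * δ) + c + 1 := by linarith

end Quasi
end Stmt5Aux

namespace Stmt5Aux
variable {X : Type*} [MetricSpace X]

section Quad
variable {δ : ℝ} (geo : GeodesicSpace X) (slim : SlimTriangles X δ)

include geo slim in
/-- Lemma Q: a deep point on a geodesic whose endpoints are W-close to the endpoints of
another geodesic is 2δ-close to the other geodesic. -/
lemma quad_deep_point {P Q P' Q' : X} {γ γ' : ℝ → X}
    (hγ : IsGeodesicFrom γ P Q) (hγ' : IsGeodesicFrom γ' P' Q')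
    {W : ℝ} (hPP' : dist P P' ≤ W) (hQQ' : dist Q Q' ≤ W)
    {t : ℝ} (ht : t ∈ Icc (0:ℝ) (dist P Q))
    (hdeepP : W + 2 * δ < dist (γ t) P) (hdeepQ : W + δ < dist (γ t) Q) :
    ∃ t' ∈ Icc (0:ℝ) (dist P' Q'), dist (γ t) (γ' t') ≤ 2 * δ := by
  obtain ⟨γ₁, hγ₁⟩ := geo P Q'
  obtain ⟨γ₂, hγ₂⟩ := geo Q' Q
  obtain ⟨u, hu, hud⟩ := slim P Q' Q γ₁ γ₂ γ hγ₁ hγ₂ hγ t ht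
  rcases hu with ⟨s, hs, rfl⟩ | ⟨s, hs, rfl⟩
  · -- u on [P, Q'] : slim the triangle P P' Q'
    obtain ⟨γ₃, hγ₃⟩ := geo P P'
    obtain ⟨v, hv, hvd⟩ := slim P P' Q' γ₃ γ' γ₁ hγ₃ hγ' hγ₁ s hs
    rcases hv with ⟨r, hr, rfl⟩ | ⟨r, hr, rfl⟩
    · -- v on [P, P'] : contradiction with depth at P
      exfalso
      have hPv : dist P (γ₃ r) ≤ W := by
        obtain ⟨g0, gL, gd⟩ := hγ₃
        have := gd 0 ⟨le_refl _, dist_nonneg⟩ r hr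
        rw [g0] at this
        rw [this, abs_of_nonpos (by linarith [hr.1])]
        linarith [hr.2]
      have h1 := dist_triangle (γ t) (γ₁ s) (γ₃ r)
      have h2 := dist_triangle (γ t) (γ₃ r) P
      rw [dist_comm (γ₃ r) P] at h2
      linarith
    · exact ⟨r, hr, by
        have := dist_triangle (γ t) (γ₁ s) (γ' r)
        linarith⟩
  · -- u on [Q', Q] : contradiction with depth at Q
    exfalso
    have hQu : dist Q (γ₂ s) ≤ W := by
      obtain ⟨g0, gL, gd⟩ := hγ₂
      have := gd (dist Q' Q) ⟨dist_nonneg, le_refl _⟩ s hs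
      rw [gL] at this
      rw [this, abs_of_nonneg (by linarith [hs.2])]
      have h5 := hs.1
      have h6 : dist Q' Q = dist Q Q' := dist_comm _ _
      linarith
    have h1 := dist_triangle (γ t) (γ₂ s) Q
    rw [dist_comm (γ₂ s) Q] at h1
    linarith

end Quad
end Stmt5Aux

namespace Stmt5Aux
variable {X : Type*} [MetricSpace X]

lemma qg_reflect {α : ℝ → X} {c r : ℝ} (hα : QG α c) : QG (fun u => α (r - u)) c := by
  intro s t
  have h := hα (r - s) (r - t)
  have : |r - s - (r - t)| = |s - t| := by
    rw [show r - s - (r - t) = -(s - t) by ring, abs_neg]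
  rw [this] at h
  exact h

section FT
variable {δ c : ℝ} (hδ : 0 ≤ δ) (hc : 1 ≤ c)
  (geo : GeodesicSpace X) (slim : SlimTriangles X δ)

include hδ hc geo slim in
/-- FT1: a point on a quasigeodesic whose far ends are W-captured by another
quasigeodesic is uniformly close to the other quasigeodesic. -/
lemma qg_point_near_qg {σ α : ℝ → X} (hσ : QG σ c) (hα : QG α c)
    {W T s₁ s₂ : ℝ} (hW : 0 ≤ W)
    (hT : W + (3*c/2 + 2*δ) + c + 2*δ + 1 ≤ T)
    (h1 : dist (σ (-T)) (α s₁) ≤ W) (h2 : dist (σ T) (α s₂) ≤ W) :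
    ∃ s : ℝ, dist (σ 0) (α s) ≤ (3*c/2 + 2*δ) + 2*δ + (2*(3*c/2 + 2*δ) + c + 1) := by
  have hT0 : 0 ≤ T := by linarith
  obtain ⟨γ, hγ⟩ := geo (σ (-T)) (σ T)
  obtain ⟨t₀, ht₀m, ht₀d⟩ := exists_geodesic_point_near geo slim hγ (σ 0)
  have hgp : gp (σ 0) (σ (-T)) (σ T) ≤ 3 * c / 2 := qg_gp hσ (by linarith) hT0
  have hM : dist (σ 0) (γ t₀) ≤ 3 * c / 2 + 2 * δ := by linarith
  have hdP : W + 2 * δ < dist (γ t₀) (σ (-T)) := by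
    have htri := dist_triangle (σ 0) (γ t₀) (σ (-T))
    have hd := (hσ 0 (-T)).1
    rw [show |(0:ℝ) - -T| = T by rw [abs_of_nonneg (by linarith)]; ring] at hd
    linarith
  have hdQ : W + δ < dist (γ t₀) (σ T) := by
    have htri := dist_triangle (σ 0) (γ t₀) (σ T)
    have hd := (hσ 0 T).1
    rw [show |(0:ℝ) - T| = T by rw [abs_of_nonpos (by linarith)]; ring] at hd
    linarith
  obtain ⟨γ', hγ'⟩ := geo (α s₁) (α s₂)
  obtain ⟨t', ht'm, ht'd⟩ :=
    quad_deep_point geo slim hγ hγ' h1 h2 ht₀m hdP hdQ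
  rcases le_total s₁ s₂ with hss | hss
  · obtain ⟨s, _, hsd⟩ := geodesic_near_qg hδ hc geo slim hα hss hγ' ht'm
    refine ⟨s, ?_⟩
    calc dist (σ 0) (α s) ≤ dist (σ 0) (γ t₀) + dist (γ t₀) (γ' t') + dist (γ' t') (α s) :=
          dist_triangle4 _ _ _ _
      _ ≤ (3*c/2 + 2*δ) + 2*δ + (2*(3*c/2 + 2*δ) + c + 1) := by linarith
  · set ᾱ : ℝ → X := fun u => α (s₁ + s₂ - u) with hᾱ
    have hᾱqg : QG ᾱ c := qg_reflect hα
    have he1 : ᾱ s₂ = α s₁ := by simp [hᾱ]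
    have he2 : ᾱ s₁ = α s₂ := by simp [hᾱ]
    have hγ'' : IsGeodesicFrom γ' (ᾱ s₂) (ᾱ s₁) := by rw [he1, he2]; exact hγ'
    have ht'm' : t' ∈ Icc (0:ℝ) (dist (ᾱ s₂) (ᾱ s₁)) := by rw [he1, he2]; exact ht'm
    obtain ⟨s, _, hsd⟩ := geodesic_near_qg hδ hc geo slim hᾱqg hss hγ'' ht'm'
    refine ⟨s₁ + s₂ - s, ?_⟩
    calc dist (σ 0) (α (s₁ + s₂ - s))
        ≤ dist (σ 0) (γ t₀) + dist (γ t₀) (γ' t') + dist (γ' t') (α (s₁ + s₂ - s)) :=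
          dist_triangle4 _ _ _ _
      _ ≤ (3*c/2 + 2*δ) + 2*δ + (2*(3*c/2 + 2*δ) + c + 1) := by
          have : dist (γ' t') (ᾱ s) = dist (γ' t') (α (s₁ + s₂ - s)) := rfl
          rw [this] at hsd
          linarith

end FT
end Stmt5Aux

namespace Stmt5Aux

def IsometricActionX (G : Type*) (X : Type*) [Group G] [MetricSpace X] [MulAction G X] : Prop :=
  ∀ g : G, Isometry fun x : X => g • x

section Master
variable {G : Type*} [Group G] {X : Type*} [MetricSpace X] [MulAction G X]

/-- partial products of the periodic word -/
def PP (gs : ℕ → G) (n : ℕ) (j : ℕ) : G :=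
  ((List.range j).map fun l => gs (l % n + 1)).prod

lemma PP_zero (gs : ℕ → G) (n : ℕ) : PP gs n 0 = 1 := rfl

lemma PP_succ (gs : ℕ → G) (n j : ℕ) :
    PP gs n (j + 1) = PP gs n j * gs (j % n + 1) := by
  unfold PP
  rw [List.range_succ, List.map_append, List.prod_append]
  simp

lemma PP_add (gs : ℕ → G) (n a b : ℕ) :
    PP gs n (a + b) = PP gs n a * ((List.range b).map fun l => gs ((a + l) % n + 1)).prod := by
  unfold PP
  rw [List.range_add, List.map_append, List.prod_append, List.map_map]
  rfl

lemma PP_shift (gs : ℕ → G) (n m i : ℕ) (hn : 1 ≤ n) :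
    PP gs n (m * n + i) = PP gs n (m * n) * PP gs n i := by
  rw [PP_add]
  congr 1
  unfold PP
  congr 1
  apply List.map_congr_left
  intro l _
  congr 2
  rw [Nat.add_comm (m*n) l, Nat.add_mul_mod_self_right]

lemma PP_period (gs : ℕ → G) (n : ℕ) (hn : 1 ≤ n) (m : ℕ) :
    PP gs n (m * n) = (PP gs n n) ^ m := by
  induction m with
  | zero => simp [PP_zero]
  | succ m ih =>
    have : (m + 1) * n = m * n + n := by ring
    rw [this, PP_shift gs n m n hn, ih, pow_succ]

variable {x₀ : X}

lemma dist_smul_act (hiso : IsometricActionX G X) (h : G) (x y : X) :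
    dist (h • x) (h • y) = dist x y := (hiso h).dist_eq x y

lemma gp_smul_act (hiso : IsometricActionX G X) (h : G) (w x y : X) :
    gp (h • w) (h • x) (h • y) = gp w x y := by
  unfold gp
  rw [dist_smul_act hiso, dist_smul_act hiso, dist_smul_act hiso]

end Master
end Stmt5Aux

namespace Stmt5Aux
section Master2
variable {G : Type*} [Group G] {X : Type*} [MetricSpace X] [MulAction G X]
variable (hiso : IsometricActionX G X) (x₀ : X) (gs : ℕ → G) (n : ℕ)

/-- the Gromov products along the chain -/
def qF (x₀ : X) (gs : ℕ → G) (n : ℕ) [MulAction G X] (j : ℕ) : ℝ :=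
  gp x₀ ((gs (j % n))⁻¹ • x₀) (gs (j % n + 1) • x₀)

lemma qF_nonneg (j : ℕ) : 0 ≤ qF x₀ gs n j := gp_nonneg _ _ _

lemma qF_period (hn : 1 ≤ n) (j : ℕ) : qF x₀ gs n j = qF x₀ gs n (j % n) := by
  unfold qF
  rw [Nat.mod_mod_of_dvd _ (dvd_refl n)]

lemma qF_le_sum (hn : 1 ≤ n) (j : ℕ) :
    qF x₀ gs n j ≤ ∑ r ∈ Finset.range n, qF x₀ gs n r := by
  rw [qF_period x₀ gs n hn j]
  apply Finset.single_le_sum (f := fun r => qF x₀ gs n r)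
  · intro i _
    exact qF_nonneg x₀ gs n i
  · exact Finset.mem_range.2 (Nat.mod_lt _ (by omega))

section withHyp
variable (hn : 1 ≤ n) (hgs0 : gs 0 = gs n) (hgs1 : gs (n + 1) = gs 1) {Cδ : ℝ}
  (Hyp : ∀ i, 1 ≤ i → i ≤ n →
    gp x₀ ((gs (i - 1))⁻¹ • x₀) (gs i • x₀) +
      gp x₀ ((gs i)⁻¹ • x₀) (gs (i + 1) • x₀) + Cδ ≤ dist x₀ (gs i • x₀))

/-- identification with the statement's Gromov products, prev flavour: for 1 ≤ i ≤ n,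
`qF (i-1) = (g_{i-1}⁻¹ x₀ | g_i x₀)`. -/
lemma qF_eq_Qp (i : ℕ) (hi1 : 1 ≤ i) (hin : i ≤ n) :
    qF x₀ gs n (i - 1) = gp x₀ ((gs (i - 1))⁻¹ • x₀) (gs i • x₀) := by
  unfold qF
  have h1 : (i - 1) % n = i - 1 := Nat.mod_eq_of_lt (by omega)
  rw [h1]
  have h2 : i - 1 + 1 = i := by omega
  rw [h2]

include hn hgs0 hgs1 in
/-- identification, next flavour: for 1 ≤ i ≤ n, `qF i = (g_i⁻¹ x₀ | g_{i+1} x₀)`. -/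
lemma qF_eq_Qn (i : ℕ) (hi1 : 1 ≤ i) (hin : i ≤ n) :
    qF x₀ gs n i = gp x₀ ((gs i)⁻¹ • x₀) (gs (i + 1) • x₀) := by
  unfold qF
  rcases Nat.lt_or_ge i n with h | h
  · rw [Nat.mod_eq_of_lt h]
  · have : i = n := by omega
    subst this
    rw [Nat.mod_self]
    rw [show (0:ℕ) + 1 = 1 by rfl, ← hgs0, ← hgs1]

include hiso hn hgs0 hgs1 Hyp in
/-- master H1 -/
lemma master_H1 (j : ℕ) (hj : 1 ≤ j) :
    qF x₀ gs n (j - 1) + qF x₀ gs n j + Cδ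
      ≤ dist (PP gs n (j - 1) • x₀) (PP gs n j • x₀) := by
  set i : ℕ := (j - 1) % n + 1 with hi
  have hmodlt := Nat.mod_lt (j - 1) (show 0 < n by omega)
  have hi1 : 1 ≤ i := by omega
  have hin : i ≤ n := by omega
  have hstep : PP gs n j = PP gs n (j - 1) * gs i := by
    conv_lhs => rw [show j = (j - 1) + 1 by omega]
    rw [PP_succ]
  have hd : dist (PP gs n (j - 1) • x₀) (PP gs n j • x₀) = dist x₀ (gs i • x₀) := by
    rw [hstep, mul_smul, ← dist_smul_act hiso (PP gs n (j - 1))⁻¹, inv_smul_smul, inv_smul_smul]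
  have hqp : qF x₀ gs n (j - 1) = gp x₀ ((gs (i - 1))⁻¹ • x₀) (gs i • x₀) := by
    unfold qF
    simp only [hi, Nat.add_sub_cancel]
  have hqn : qF x₀ gs n j = gp x₀ ((gs i)⁻¹ • x₀) (gs (i + 1) • x₀) := by
    unfold qF
    rcases Nat.lt_or_ge ((j - 1) % n) (n - 1) with h | h
    · have e1 : j % n = (j - 1) % n + 1 := by
        conv_lhs => rw [show j = (j - 1) + 1 by omega]
        rw [Nat.add_mod,
          Nat.mod_eq_of_lt (show 1 < n by omega), Nat.mod_eq_of_lt (by omega)]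
      rw [e1, ← hi]
    · have hmod : (j - 1) % n = n - 1 := by omega
      have e1 : j % n = 0 := by
        conv_lhs => rw [show j = (j - 1) + 1 by omega]
        rcases Nat.lt_or_ge 1 n with h1 | h1
        · rw [Nat.add_mod, hmod, Nat.mod_eq_of_lt h1,
            Nat.sub_add_cancel (show 1 ≤ n by omega), Nat.mod_self]
        · have hn1 : n = 1 := by omega
          rw [hn1]
          omega
      rw [e1]
      have hin' : i = n := by omega
      rw [hin', show (0:ℕ) + 1 = 1 by rfl, ← hgs0, ← hgs1]
  rw [hd, hqp, hqn]
  exact Hyp i hi1 hin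

include hiso hn hgs0 in
/-- master H2 -/
lemma master_H2 (j : ℕ) (hj : 1 ≤ j) :
    gp (PP gs n j • x₀) (PP gs n (j - 1) • x₀) (PP gs n (j + 1) • x₀)
      ≤ qF x₀ gs n j := by
  have hmodlt := Nat.mod_lt (j - 1) (show 0 < n by omega)
  have hstep : PP gs n j = PP gs n (j - 1) * gs ((j - 1) % n + 1) := by
    conv_lhs => rw [show j = (j - 1) + 1 by omega]
    rw [PP_succ]
  have hz1 : PP gs n (j - 1) • x₀ = PP gs n j • ((gs ((j - 1) % n + 1))⁻¹ • x₀) := by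
    rw [hstep, mul_smul, smul_inv_smul]
  have hz2 : PP gs n (j + 1) • x₀ = PP gs n j • (gs (j % n + 1) • x₀) := by
    rw [PP_succ, mul_smul]
  rw [hz1, hz2, gp_smul_act hiso]
  unfold qF
  have hletter : gs ((j - 1) % n + 1) = gs (j % n) := by
    rcases Nat.lt_or_ge ((j - 1) % n) (n - 1) with h | h
    · congr 1
      have e1 : j % n = (j - 1) % n + 1 := by
        conv_lhs => rw [show j = (j - 1) + 1 by omega]
        rw [Nat.add_mod,
          Nat.mod_eq_of_lt (show 1 < n by omega), Nat.mod_eq_of_lt (by omega)]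
      rw [e1]
    · have hmod : (j - 1) % n = n - 1 := by omega
      have e1 : j % n = 0 := by
        conv_lhs => rw [show j = (j - 1) + 1 by omega]
        rcases Nat.lt_or_ge 1 n with h1 | h1
        · rw [Nat.add_mod, hmod, Nat.mod_eq_of_lt h1,
            Nat.sub_add_cancel (show 1 ≤ n by omega), Nat.mod_self]
        · have hn1 : n = 1 := by omega
          rw [hn1]
          omega
      rw [hmod, e1, Nat.sub_add_cancel (show 1 ≤ n by omega), hgs0]
  rw [hletter]

include hiso hn in
/-- step distances of the master chain -/
lemma master_dist (j : ℕ) :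
    dist (PP gs n j • x₀) (PP gs n (j + 1) • x₀) = dist x₀ (gs (j % n + 1) • x₀) := by
  rw [PP_succ, mul_smul, ← dist_smul_act hiso (PP gs n j)⁻¹, inv_smul_smul, inv_smul_smul]

end withHyp
end Master2
end Stmt5Aux

namespace Stmt5Aux
variable {X : Type*} [MetricSpace X]

/-- any point of a geodesic joining two points of a quasigeodesic is near its image
(no order assumption). -/
lemma geodesic_near_qg_pair {δ c : ℝ} (hδ : 0 ≤ δ) (hc : 1 ≤ c)
    (geo : GeodesicSpace X) (slim : SlimTriangles X δ)
    {α : ℝ → X} (hα : QG α c) (a b : ℝ)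
    {γ : ℝ → X} (hγ : IsGeodesicFrom γ (α a) (α b)) {t : ℝ}
    (ht : t ∈ Icc (0:ℝ) (dist (α a) (α b))) :
    ∃ s : ℝ, dist (γ t) (α s) ≤ 2 * (3 * c / 2 + 2 * δ) + c + 1 := by
  rcases le_total a b with hab | hab
  · obtain ⟨s, _, hs⟩ := geodesic_near_qg hδ hc geo slim hα hab hγ ht
    exact ⟨s, hs⟩
  · set ᾱ : ℝ → X := fun u => α (a + b - u) with hᾱ
    have hᾱqg : QG ᾱ c := qg_reflect hα
    have he1 : ᾱ b = α a := by simp [hᾱ]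
    have he2 : ᾱ a = α b := by simp [hᾱ]
    have hγ' : IsGeodesicFrom γ (ᾱ b) (ᾱ a) := by rw [he1, he2]; exact hγ
    have ht' : t ∈ Icc (0:ℝ) (dist (ᾱ b) (ᾱ a)) := by rw [he1, he2]; exact ht
    obtain ⟨s, _, hs⟩ := geodesic_near_qg hδ hc geo slim hᾱqg hab hγ' ht'
    exact ⟨a + b - s, hs⟩

lemma sum_period (F : ℕ → ℝ) (n : ℕ) (hn : 1 ≤ n) (hF : ∀ j, F j = F (j % n)) (m : ℕ) :
    ∑ j ∈ Finset.range (m * n), F j = m * ∑ r ∈ Finset.range n, F r := by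
  induction m with
  | zero => simp
  | succ m ih =>
    have hmn : m * n ≤ (m + 1) * n := by nlinarith
    have hsplit := Finset.sum_range_add_sum_Ico F hmn
    have hIco : ∑ j ∈ Finset.Ico (m * n) ((m + 1) * n), F j = ∑ r ∈ Finset.range n, F r := by
      rw [Finset.sum_Ico_eq_sum_range]
      have he : (m + 1) * n - m * n = n := by
        have : (m + 1) * n = m * n + n := by ring
        omega
      rw [he]
      apply Finset.sum_congr rfl
      intro r hr
      have hrn : r < n := Finset.mem_range.mp hr
      rw [hF (m * n + r), Nat.add_comm (m*n) r, Nat.add_mul_mod_self_right,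
        Nat.mod_eq_of_lt hrn]
    push_cast
    rw [← hsplit, ih, hIco]
    ring

end Stmt5Aux

namespace Stmt5Aux
section Master3
variable {G : Type*} [Group G] {X : Type*} [MetricSpace X] [MulAction G X]
variable (hiso : IsometricActionX G X) (x₀ : X) (gs : ℕ → G) (n : ℕ)
variable {δ₄ : ℝ} (hδ₄ : 0 ≤ δ₄)
  (hyp4 : ∀ w x y z : X, min (gp w x y) (gp w y z) - δ₄ ≤ gp w x z)
variable (hn : 1 ≤ n) (hgs0 : gs 0 = gs n) (hgs1 : gs (n + 1) = gs 1) {Cδ : ℝ}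
  (hCc : 3 * δ₄ + 1 ≤ Cδ)
  (Hyp : ∀ i, 1 ≤ i → i ≤ n →
    gp x₀ ((gs (i - 1))⁻¹ • x₀) (gs i • x₀) +
      gp x₀ ((gs i)⁻¹ • x₀) (gs (i + 1) • x₀) + Cδ ≤ dist x₀ (gs i • x₀))

include hiso hδ₄ hyp4 hn hgs0 hgs1 hCc Hyp

/-- linear lower bound on distances along the master chain -/
lemma master_progress (s k : ℕ) :
    (k : ℝ) * (Cδ - 2 * δ₄) - (∑ r ∈ Finset.range n, qF x₀ gs n r)
      ≤ dist (PP gs n s • x₀) (PP gs n (s + k) • x₀) := by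
  set z' : ℕ → X := fun l => PP gs n (s + l) • x₀ with hz'
  set q' : ℕ → ℝ := fun l => qF x₀ gs n (s + l) with hq'
  have H1' : ∀ j, 1 ≤ j → j ≤ k → q' (j - 1) + q' j + Cδ ≤ dist (z' (j - 1)) (z' j) := by
    intro j hj _
    have := master_H1 hiso x₀ gs n hn hgs0 hgs1 Hyp (s + j) (by omega)
    simp only [hz', hq']
    have e1 : s + (j - 1) = s + j - 1 := by omega
    rw [e1]
    exact this
  have H2' : ∀ j, 1 ≤ j → j + 1 ≤ k →
      gp (z' j) (z' (j - 1)) (z' (j + 1)) ≤ q' j := by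
    intro j hj _
    have := master_H2 hiso x₀ gs n hn hgs0 (s + j) (by omega)
    simp only [hz', hq']
    have e1 : s + (j - 1) = s + j - 1 := by omega
    have e2 : s + (j + 1) = s + j + 1 := by omega
    rw [e1, e2]
    exact this
  have H3' : ∀ j, 0 ≤ q' j := fun j => qF_nonneg x₀ gs n _
  have hprog := chain_progress hδ₄ hyp4 z' q' Cδ k hCc H1' H2' H3' k (le_refl _)
  have hterm : ∀ j ∈ Finset.range k,
      q' (j + 1) - q' j + (Cδ - 2 * δ₄) ≤ dist (z' j) (z' (j + 1)) - 2 * q' j - 2 * δ₄ := by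
    intro j hj
    have hjk := Finset.mem_range.mp hj
    have := H1' (j + 1) (by omega) (by omega)
    simp only [Nat.add_sub_cancel] at this
    linarith
  have hsum := Finset.sum_le_sum hterm
  have htel : ∑ j ∈ Finset.range k, (q' (j + 1) - q' j + (Cδ - 2 * δ₄))
      = (q' k - q' 0) + (k : ℝ) * (Cδ - 2 * δ₄) := by
    rw [Finset.sum_add_distrib, Finset.sum_range_sub, Finset.sum_const, Finset.card_range]
    simp [nsmul_eq_mul]
  have hq'k : 0 ≤ q' k := H3' k
  have hq'0 : q' 0 ≤ ∑ r ∈ Finset.range n, qF x₀ gs n r := qF_le_sum x₀ gs n hn _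
  have hz'0 : z' 0 = PP gs n s • x₀ := by simp [hz']
  rw [hz'0] at hprog
  calc (k : ℝ) * (Cδ - 2*δ₄) - (∑ r ∈ Finset.range n, qF x₀ gs n r)
      ≤ (q' k - q' 0) + (k : ℝ) * (Cδ - 2*δ₄) := by linarith
    _ = ∑ j ∈ Finset.range k, (q' (j + 1) - q' j + (Cδ - 2 * δ₄)) := htel.symm
    _ ≤ ∑ j ∈ Finset.range k, (dist (z' j) (z' (j+1)) - 2 * q' j - 2 * δ₄) := hsum
    _ ≤ dist (PP gs n s • x₀) (PP gs n (s + k) • x₀) := hprog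

/-- middle Gromov product bound along the master chain -/
lemma master_middle (N i : ℕ) (hi1 : 1 ≤ i) (hiN : i + 1 ≤ N) :
    gp (PP gs n i • x₀) x₀ (PP gs n N • x₀) ≤ qF x₀ gs n i + 2 * δ₄ := by
  have H1' : ∀ j, 1 ≤ j → j ≤ N →
      qF x₀ gs n (j - 1) + qF x₀ gs n j + Cδ
        ≤ dist (PP gs n (j - 1) • x₀) (PP gs n j • x₀) :=
    fun j hj _ => master_H1 hiso x₀ gs n hn hgs0 hgs1 Hyp j hj
  have H2' : ∀ j, 1 ≤ j → j + 1 ≤ N →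
      gp (PP gs n j • x₀) (PP gs n (j - 1) • x₀) (PP gs n (j + 1) • x₀) ≤ qF x₀ gs n j :=
    fun j hj _ => master_H2 hiso x₀ gs n hn hgs0 j hj
  have H3' : ∀ j, 0 ≤ qF x₀ gs n j := qF_nonneg x₀ gs n
  have hcc := chain_middle hδ₄ hyp4 (fun j => PP gs n j • x₀) (qF x₀ gs n) Cδ N hCc
    H1' H2' H3' i hi1 hiN
  beta_reduce at hcc
  have hz0 : PP gs n 0 • x₀ = x₀ := by rw [PP_zero, one_smul]
  rw [hz0] at hcc
  exact hcc

end Master3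
end Stmt5Aux

open Stmt5Aux in
set_option maxHeartbeats 3000000 in
/-- There is a constant `C > 0`, depending only on `δ`, such that if an
isometry `g` of a δ-hyperbolic geodesic space is a product `g = g₁ ⋯ g_n` with
`d(x₀, g_i x₀) ≥ (g_{i-1}⁻¹x₀|g_i x₀) + (g_i⁻¹x₀|g_{i+1}x₀) + C` (cyclic conventions),
then `τ(g) ≥ Σ (d(x₀, g_i x₀) - (g_{i-1}⁻¹x₀|g_i x₀) - (g_i⁻¹x₀|g_{i+1}x₀) - C)`; in
particular `g` is hyperbolic. Moreover any geodesic from `x₀` to `g x₀`, and any axis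
of `g`, passes within `(g_{i-1}⁻¹x₀|g_i x₀) + (g_i⁻¹x₀|g_{i+1}x₀) + C` of each point
`g₁ ⋯ g_i x₀`. -/
theorem stmt_5 :
    ∃ C : ℝ → ℝ, ∀ δ : ℝ, 0 ≤ δ → 0 < C δ ∧
      ∀ (X : Type) [MetricSpace X], DeltaHyperbolic X δ →
      ∀ (G : Type) [Group G] [MulAction G X], IsometricAction G X →
      ∀ (x₀ : X) (n : ℕ), 1 ≤ n → ∀ gs : ℕ → G,
        gs 0 = gs n → gs (n + 1) = gs 1 →
        (∀ i, 1 ≤ i → i ≤ n →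
          gp x₀ ((gs (i - 1))⁻¹ • x₀) (gs i • x₀) +
              gp x₀ ((gs i)⁻¹ • x₀) (gs (i + 1) • x₀) + C δ
            ≤ dist x₀ (gs i • x₀)) →
        ∀ g : G, g = ((List.range n).map fun j => gs (j + 1)).prod →
          (∃ τ : ℝ, 0 < τ ∧ HasTranslationLength g x₀ τ ∧
            (∑ i ∈ Finset.Icc 1 n, (dist x₀ (gs i • x₀) -
                gp x₀ ((gs (i - 1))⁻¹ • x₀) (gs i • x₀) -
                gp x₀ ((gs i)⁻¹ • x₀) (gs (i + 1) • x₀) - C δ)) ≤ τ) ∧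
          (∀ γ : ℝ → X, IsGeodesicFrom γ x₀ (g • x₀) →
            ∀ i, 1 ≤ i → i ≤ n →
              ∃ u ∈ γ '' Icc (0 : ℝ) (dist x₀ (g • x₀)),
                dist u ((((List.range i).map fun j => gs (j + 1)).prod) • x₀) ≤
                  gp x₀ ((gs (i - 1))⁻¹ • x₀) (gs i • x₀) +
                    gp x₀ ((gs i)⁻¹ • x₀) (gs (i + 1) • x₀) + C δ) ∧
          (∀ α : ℝ → X, IsAxis δ g x₀ α →
            ∀ i, 1 ≤ i → i ≤ n →
              ∃ u ∈ Set.range α,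
                dist u ((((List.range i).map fun j => gs (j + 1)).prod) • x₀) ≤
                  gp x₀ ((gs (i - 1))⁻¹ • x₀) (gs i • x₀) +
                    gp x₀ ((gs i)⁻¹ • x₀) (gs (i + 1) • x₀) + C δ) := by
  refine ⟨fun d => 1000 * (d + 1), ?_⟩
  intro δ hδ
  beta_reduce
  refine ⟨by linarith, ?_⟩
  intro X _instX hyp G _instG _instA hiso x₀ n hn gs hgs0 hgs1 Hyp g hg
  obtain ⟨hδ0, geo, slim⟩ := hyp
  have hiso' : IsometricActionX G X := hiso
  set δ₄ : ℝ := 3 * δ with hδ₄def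
  have hδ₄ : 0 ≤ δ₄ := by simp only [hδ₄def]; linarith
  have hyp4 : ∀ w x y z : X, min (gp w x y) (gp w y z) - δ₄ ≤ gp w x z :=
    fun w x y z => four_point geo slim w x y z
  set Cδ : ℝ := 1000 * (δ + 1) with hCδdef
  have hCc : 3 * δ₄ + 1 ≤ Cδ := by simp only [hδ₄def, hCδdef]; linarith
  -- identification of partial products
  have hPi : ∀ i, i ≤ n → PP gs n i = ((List.range i).map fun j => gs (j + 1)).prod := by
    intro i hin
    unfold PP
    congr 1
    apply List.map_congr_left
    intro l hl
    have hl' : l < i := List.mem_range.mp hl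
    congr 2
    exact Nat.mod_eq_of_lt (by omega)
  have hPn : PP gs n n = g := by rw [hPi n (le_refl n), ← hg]
  have hzg : ∀ m : ℕ, PP gs n (m * n) • x₀ = (g ^ m) • x₀ := by
    intro m
    rw [PP_period gs n hn, hPn]
  have hz0 : PP gs n 0 • x₀ = x₀ := by rw [PP_zero, one_smul]
  -- abbreviations
  set q : ℕ → ℝ := qF x₀ gs n with hqdef
  set qS : ℝ := ∑ r ∈ Finset.range n, q r with hqSdef
  -- subadditivity and the translation length
  set u : ℕ → ℝ := fun m => dist x₀ ((g ^ m) • x₀) with hudef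
  have hsub : Subadditive u := by
    intro a b
    simp only [hudef]
    have h1 := dist_triangle x₀ ((g ^ a) • x₀) ((g ^ (a + b)) • x₀)
    have h2 : dist ((g ^ a) • x₀) ((g ^ (a + b)) • x₀) = dist x₀ ((g ^ b) • x₀) := by
      rw [pow_add, mul_smul, dist_smul_act hiso' (g ^ a)]
    linarith
  have hbdd : BddBelow (Set.range fun m : ℕ => u m / m) := by
    refine ⟨0, ?_⟩
    rintro _ ⟨m, rfl⟩
    positivity
  set τ : ℝ := hsub.lim with hτdef
  have htend : Tendsto (fun m : ℕ => u m / m) atTop (nhds τ) := hsub.tendsto_lim hbdd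
  -- per-period progress
  set S' : ℝ := ∑ r ∈ Finset.range n,
    (dist x₀ (gs (r + 1) • x₀) - 2 * q r - 2 * δ₄) with hS'def
  have hprog : ∀ m : ℕ, (m : ℝ) * S' ≤ u m := by
    intro m
    have H1' : ∀ j, 1 ≤ j → j ≤ m * n →
        q (j - 1) + q j + Cδ ≤ dist (PP gs n (j - 1) • x₀) (PP gs n j • x₀) :=
      fun j hj _ => master_H1 hiso' x₀ gs n hn hgs0 hgs1 Hyp j hj
    have H2' : ∀ j, 1 ≤ j → j + 1 ≤ m * n →
        gp (PP gs n j • x₀) (PP gs n (j - 1) • x₀) (PP gs n (j + 1) • x₀) ≤ q j :=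
      fun j hj _ => master_H2 hiso' x₀ gs n hn hgs0 j hj
    have H3' : ∀ j, 0 ≤ q j := qF_nonneg x₀ gs n
    have hcp := chain_progress hδ₄ hyp4 (fun j => PP gs n j • x₀) q Cδ (m * n) hCc
      H1' H2' H3' (m * n) (le_refl _)
    beta_reduce at hcp
    rw [hz0, hzg m] at hcp
    have hterm : ∀ j ∈ Finset.range (m * n),
        dist (PP gs n j • x₀) (PP gs n (j + 1) • x₀) - 2 * q j - 2 * δ₄
          = (fun j => dist x₀ (gs (j % n + 1) • x₀) - 2 * q j - 2 * δ₄) j := by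
      intro j _
      simp only []
      rw [master_dist hiso' x₀ gs n hn j]
    rw [Finset.sum_congr rfl hterm] at hcp
    have hper := sum_period (fun j => dist x₀ (gs (j % n + 1) • x₀) - 2 * q j - 2 * δ₄)
      n hn ?_ m
    · rw [hper] at hcp
      have : ∀ r ∈ Finset.range n,
          (fun j => dist x₀ (gs (j % n + 1) • x₀) - 2 * q j - 2 * δ₄) r
            = dist x₀ (gs (r + 1) • x₀) - 2 * q r - 2 * δ₄ := by
        intro r hr
        simp only []
        rw [Nat.mod_eq_of_lt (Finset.mem_range.mp hr)]
      rw [Finset.sum_congr rfl this] at hcp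
      exact le_trans (le_of_eq (by rw [hS'def])) hcp
    · intro j
      beta_reduce
      rw [Nat.mod_mod_of_dvd _ (dvd_refl n), hqdef, qF_period x₀ gs n hn j]
  -- the statement's sum
  set S : ℝ := ∑ i ∈ Finset.Icc 1 n, (dist x₀ (gs i • x₀) -
      gp x₀ ((gs (i - 1))⁻¹ • x₀) (gs i • x₀) -
      gp x₀ ((gs i)⁻¹ • x₀) (gs (i + 1) • x₀) - Cδ) with hSdef
  have hSrange : S = ∑ r ∈ Finset.range n,
      (dist x₀ (gs (r + 1) • x₀) - q r - q (r + 1) - Cδ) := by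
    rw [hSdef, ← Finset.Ico_add_one_right_eq_Icc, Finset.sum_Ico_eq_sum_range]
    try simp only [Nat.add_sub_cancel]
    apply Finset.sum_congr rfl
    intro r hr
    have hrn : r < n := Finset.mem_range.mp hr
    have e1 : 1 + r = r + 1 := by omega
    rw [e1]
    have hqp : gp x₀ ((gs r)⁻¹ • x₀) (gs (r + 1) • x₀) = q r := by
      rw [hqdef]
      have h := qF_eq_Qp x₀ gs n (r + 1) (by omega) (by omega)
      simp only [Nat.add_sub_cancel] at h
      exact h.symm
    have hqn : gp x₀ ((gs (r + 1))⁻¹ • x₀) (gs (r + 1 + 1) • x₀) = q (r + 1) := by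
      rw [hqdef]
      exact (qF_eq_Qn x₀ gs n hn hgs0 hgs1 (r + 1) (by omega) (by omega)).symm
    simp only [Nat.add_sub_cancel]
    rw [hqp, hqn]
  have hqn0 : q n = q 0 := by
    rw [hqdef, qF_period x₀ gs n hn n, Nat.mod_self]
  have hS'S : S' = S + (n : ℝ) * (Cδ - 2 * δ₄) := by
    rw [hS'def, hSrange]
    have : ∀ r ∈ Finset.range n,
        dist x₀ (gs (r + 1) • x₀) - 2 * q r - 2 * δ₄
          = (dist x₀ (gs (r + 1) • x₀) - q r - q (r + 1) - Cδ)
            + ((q (r + 1) - q r) + (Cδ - 2 * δ₄)) := by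
      intro r _; ring
    rw [Finset.sum_congr rfl this, Finset.sum_add_distrib, Finset.sum_add_distrib,
      Finset.sum_range_sub, Finset.sum_const, Finset.card_range, hqn0]
    simp [nsmul_eq_mul]
  have hSnonneg : 0 ≤ S := by
    rw [hSdef]
    apply Finset.sum_nonneg
    intro i hi
    obtain ⟨hi1, hin⟩ := Finset.mem_Icc.mp hi
    have := Hyp i hi1 hin
    linarith
  have hCd2 : 0 < Cδ - 2 * δ₄ := by simp only [hCδdef, hδ₄def]; linarith
  have hS'pos : 0 < S' := by
    rw [hS'S]
    have : (1:ℝ) ≤ (n:ℝ) := by exact_mod_cast hn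
    nlinarith
  have hτS' : S' ≤ τ := by
    apply ge_of_tendsto htend
    filter_upwards [eventually_ge_atTop 1] with m hm
    have hm0 : (0:ℝ) < m := by exact_mod_cast hm
    rw [le_div_iff₀ hm0]
    calc S' * m = (m:ℝ) * S' := by ring
      _ ≤ u m := hprog m
  refine ⟨⟨τ, lt_of_lt_of_le hS'pos hτS', htend, ?_⟩, ?_, ?_⟩
  · calc S ≤ S' := by nlinarith [hS'S, hCd2, (show (1:ℝ) ≤ (n:ℝ) by exact_mod_cast hn)]
      _ ≤ τ := hτS'
  · -- geodesics pass near the chain points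
    intro γ hγ i hi1 hin
    have hpt : (((List.range i).map fun j => gs (j + 1)).prod : G) • x₀ = PP gs n i • x₀ := by
      rw [hPi i hin]
    have hQp0 : 0 ≤ gp x₀ ((gs (i - 1))⁻¹ • x₀) (gs i • x₀) := gp_nonneg _ _ _
    have hQn0 : 0 ≤ gp x₀ ((gs i)⁻¹ • x₀) (gs (i + 1) • x₀) := gp_nonneg _ _ _
    rcases Nat.lt_or_ge i n with hilt | hige
    · have hmid : gp (PP gs n i • x₀) x₀ (PP gs n n • x₀) ≤ q i + 2 * δ₄ :=
        master_middle hiso' x₀ gs n hδ₄ hyp4 hn hgs0 hgs1 hCc Hyp n i hi1 (by omega)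
      rw [hPn] at hmid
      obtain ⟨t, htm, htd⟩ := exists_geodesic_point_near geo slim hγ (PP gs n i • x₀)
      refine ⟨γ t, ⟨t, htm, rfl⟩, ?_⟩
      rw [hpt, dist_comm]
      have hqeq : q i = gp x₀ ((gs i)⁻¹ • x₀) (gs (i + 1) • x₀) := by
        rw [hqdef]; exact qF_eq_Qn x₀ gs n hn hgs0 hgs1 i hi1 hin
      have hCδ' : Cδ = 1000 * (δ + 1) := hCδdef
      have hδ₄' : δ₄ = 3 * δ := hδ₄def
      linarith
    · have hieq : i = n := by omega
      subst hieq
      refine ⟨γ (dist x₀ (g • x₀)), ⟨dist x₀ (g • x₀), ⟨dist_nonneg, le_refl _⟩, rfl⟩, ?_⟩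
      rw [hγ.2.1, hpt, hPn]
      rw [dist_self]
      have hCδ' : Cδ = 1000 * (δ + 1) := hCδdef
      linarith
  · -- axes pass near the chain points
    intro α hα i hi1 hin
    obtain ⟨hαqg0, τ', hτ'pos, hτ'len, C₀, hC₀⟩ := hα
    set c : ℝ := 100 * (δ + 1) with hcdef
    have hc : (1:ℝ) ≤ c := by rw [hcdef]; linarith
    have hαqg : QG α c := fun s t => hαqg0 s t
    have hC₀0 : 0 ≤ C₀ := le_trans dist_nonneg (hC₀ 0)
    set D : ℝ := dist x₀ (α 0) with hDdef
    have hD0 : 0 ≤ D := dist_nonneg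
    have hpt : (((List.range i).map fun j => gs (j + 1)).prod : G) • x₀ = PP gs n i • x₀ := by
      rw [hPi i hin]
    -- claim0 : iterates of g coarsely translate α
    have claim0 : ∀ k : ℕ, ∀ s : ℝ, dist ((g ^ k) • α s) (α (s + k * τ')) ≤ k * C₀ := by
      intro k
      induction k with
      | zero => intro s; simp
      | succ k ih =>
        intro s
        have h1 : dist ((g ^ (k+1)) • α s) (g • α (s + k * τ')) ≤ k * C₀ := by
          have he : (g ^ (k+1)) • α s = g • ((g ^ k) • α s) := by
            rw [pow_succ', mul_smul]
          rw [he, dist_smul_act hiso' g]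
          exact ih s
        have h2 := hC₀ (s + k * τ')
        have he2 : s + (k:ℝ) * τ' + τ' = s + ((k:ℕ)+1 : ℝ) * τ' := by ring
        rw [he2] at h2
        have htri := dist_triangle ((g ^ (k+1)) • α s) (g • α (s + k * τ'))
          (α (s + (((k:ℕ)+1:ℝ)) * τ'))
        have hcast : ((k+1 : ℕ) : ℝ) = ((k:ℕ) : ℝ) + 1 := by push_cast; ring
        rw [hcast]
        linarith
    have claim0' : ∀ k : ℕ, ∀ s : ℝ, dist (((g ^ k)⁻¹) • α s) (α (s - k * τ')) ≤ k * C₀ := by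
      intro k s
      have h := claim0 k (s - k * τ')
      have he : s - (k:ℝ) * τ' + (k:ℝ) * τ' = s := by ring
      rw [he] at h
      rw [← dist_smul_act hiso' ((g ^ k)⁻¹), inv_smul_smul] at h
      rw [dist_comm]
      exact h
    set M₂ : ℝ := (3*c/2 + 2*δ) + 2*δ + (2*(3*c/2 + 2*δ) + c + 1) with hM₂def
    have hM₂0 : 0 ≤ M₂ := by rw [hM₂def]; linarith
    set R : ℝ := D + M₂ with hRdef
    have hR0 : 0 ≤ R := by rw [hRdef]; linarith
    -- capture of the forward and backward orbits by α
    have capP : ∀ k : ℕ, ∃ s : ℝ, dist ((g ^ k) • x₀) (α s) ≤ R := by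
      intro k
      set W : ℝ := k * C₀ with hW
      have hW0 : 0 ≤ W := by positivity
      set T : ℝ := W + (3*c/2 + 2*δ) + c + 2*δ + 1 with hT
      set σ : ℝ → X := fun t => (g ^ k) • α t with hσ
      have hσqg : QG σ c := by
        intro s t
        simp only [hσ]
        rw [dist_smul_act hiso' (g ^ k)]
        exact hαqg s t
      have h1 : dist (σ (-T)) (α (-T + k * τ')) ≤ W := claim0 k (-T)
      have h2 : dist (σ T) (α (T + k * τ')) ≤ W := claim0 k T
      obtain ⟨s, hs⟩ := qg_point_near_qg hδ0 hc geo slim hσqg hαqg hW0 (le_of_eq hT.symm) h1 h2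
      refine ⟨s, ?_⟩
      have hge : dist ((g ^ k) • x₀) (σ 0) = D := by
        simp only [hσ]
        rw [dist_smul_act hiso' (g ^ k)]
      have htri := dist_triangle ((g ^ k) • x₀) (σ 0) (α s)
      rw [hge] at htri
      rw [hRdef, hM₂def]
      linarith
    have capN : ∀ k : ℕ, ∃ s : ℝ, dist (((g ^ k)⁻¹) • x₀) (α s) ≤ R := by
      intro k
      set W : ℝ := k * C₀ with hW
      have hW0 : 0 ≤ W := by positivity
      set T : ℝ := W + (3*c/2 + 2*δ) + c + 2*δ + 1 with hT
      set σ : ℝ → X := fun t => ((g ^ k)⁻¹) • α t with hσ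
      have hσqg : QG σ c := by
        intro s t
        simp only [hσ]
        rw [dist_smul_act hiso' ((g ^ k)⁻¹)]
        exact hαqg s t
      have h1 : dist (σ (-T)) (α (-T - k * τ')) ≤ W := claim0' k (-T)
      have h2 : dist (σ T) (α (T - k * τ')) ≤ W := claim0' k T
      obtain ⟨s, hs⟩ := qg_point_near_qg hδ0 hc geo slim hσqg hαqg hW0 (le_of_eq hT.symm) h1 h2
      refine ⟨s, ?_⟩
      have hge : dist (((g ^ k)⁻¹) • x₀) (σ 0) = D := by
        simp only [hσ]
        rw [dist_smul_act hiso' ((g ^ k)⁻¹)]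
      have htri := dist_triangle (((g ^ k)⁻¹) • x₀) (σ 0) (α s)
      rw [hge] at htri
      rw [hRdef, hM₂def]
      linarith
    -- choose the power m
    obtain ⟨m₀, hm₀⟩ := exists_nat_gt (R + 2*δ + (q i + 2*δ₄ + 2*δ) + qS + 1)
    set m : ℕ := m₀ + 2 with hm
    set Om : X := (g ^ m) • x₀ with hOm
    set Om' : X := ((g ^ m)⁻¹) • x₀ with hOm'
    obtain ⟨βg, hβ⟩ := geo Om' Om
    set w : X := PP gs n i • x₀ with hwdef
    -- nat arithmetic facts
    have hmn2 : 2 * n ≤ m * n := Nat.mul_le_mul_right n (by omega)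
    have hnmn : n ≤ m * n := Nat.le_mul_of_pos_left n (by omega)
    have hee : 2*m*n = m*n + m*n := by ring
    have hmm' : m ≤ m * n := Nat.le_mul_of_pos_right m (by omega)
    have hA : (m - 1) * n = m*n - n := by rw [Nat.sub_mul, one_mul]
    have hB : m₀ + 1 ≤ (m - 1) * n := by
      have h1 : (m - 1) * 1 ≤ (m - 1) * n := Nat.mul_le_mul_left (m - 1) hn
      omega
    -- identifications after translating by g^m
    have hshift : PP gs n (m*n + i) = (g ^ m) * PP gs n i := by
      rw [PP_shift gs n m i hn, PP_period gs n hn, hPn]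
    have hgw : (g ^ m) • w = PP gs n (m*n + i) • x₀ := by
      rw [hshift, mul_smul, hwdef]
    have hgO : (g ^ m) • Om' = x₀ := smul_inv_smul _ _
    have hgO2 : (g ^ m) • Om = PP gs n (2*m*n) • x₀ := by
      have h2m : PP gs n (2*m*n) = g ^ (2*m) := by
        have he : 2*m*n = (2*m)*n := by ring
        rw [he, PP_period gs n hn, hPn]
      rw [h2m, hOm, smul_smul, ← pow_add]
      congr 2
      omega
    -- Gromov product bound at w from the ends
    have hmidm : gp w Om' Om ≤ q i + 2*δ₄ := by
      have hmm := master_middle hiso' x₀ gs n hδ₄ hyp4 hn hgs0 hgs1 hCc Hyp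
        (2*m*n) (m*n + i) (by omega) (by omega)
      have hqeq : qF x₀ gs n (m*n + i) = q i := by
        rw [hqdef, qF_period x₀ gs n hn (m*n + i), qF_period x₀ gs n hn i]
        congr 1
        rw [Nat.add_comm, Nat.add_mul_mod_self_right]
      rw [hqeq] at hmm
      have hge := gp_smul_act hiso' (g ^ m) w Om' Om
      rw [hgw, hgO, hgO2] at hge
      rw [← hge]
      exact hmm
    -- the nearest point on the geodesic between the far ends
    obtain ⟨tm, htmm, htmd⟩ := exists_geodesic_point_near geo slim hβ w
    have htmd' : dist w (βg tm) ≤ q i + 2*δ₄ + 2*δ := by linarith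
    -- depth estimates
    have hCd1 : (1:ℝ) ≤ Cδ - 2*δ₄ := by linarith
    have hdlowP : (m₀ + 1 : ℝ) - qS ≤ dist Om' w := by
      have hmp := master_progress hiso' x₀ gs n hδ₄ hyp4 hn hgs0 hgs1 hCc Hyp 0 (m*n + i)
      have he : (0:ℕ) + (m*n + i) = m*n + i := by omega
      rw [he, PP_zero, one_smul] at hmp
      have hd : dist Om' w = dist x₀ (PP gs n (m*n + i) • x₀) := by
        rw [← dist_smul_act hiso' (g ^ m) Om' w, hgO, hgw]
      rw [hd]
      have hk : (m₀ + 1 : ℕ) ≤ m*n + i := by omega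
      have hkr : ((m₀ + 1 : ℕ) : ℝ) ≤ ((m*n + i : ℕ) : ℝ) := Nat.cast_le.mpr hk
      have hmul : ((m₀ + 1 : ℕ) : ℝ) * 1 ≤ ((m*n + i : ℕ) : ℝ) * (Cδ - 2*δ₄) :=
        mul_le_mul hkr hCd1 (by norm_num) (Nat.cast_nonneg _)
      have hc1 : ((m₀ + 1 : ℕ) : ℝ) = (m₀ : ℝ) + 1 := by push_cast; ring
      rw [hc1, mul_one] at hmul
      linarith
    have hdlowQ : (m₀ + 1 : ℝ) - qS ≤ dist w Om := by
      have hmp := master_progress hiso' x₀ gs n hδ₄ hyp4 hn hgs0 hgs1 hCc Hyp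
        (m*n + i) (m*n - i)
      have he : m*n + i + (m*n - i) = 2*m*n := by omega
      rw [he] at hmp
      have hd : dist w Om = dist (PP gs n (m*n + i) • x₀) (PP gs n (2*m*n) • x₀) := by
        rw [← dist_smul_act hiso' (g ^ m) w Om, hgw, hgO2]
      rw [hd]
      have hk : (m₀ + 1 : ℕ) ≤ m*n - i := by omega
      have hkr : ((m₀ + 1 : ℕ) : ℝ) ≤ ((m*n - i : ℕ) : ℝ) := Nat.cast_le.mpr hk
      have hmul : ((m₀ + 1 : ℕ) : ℝ) * 1 ≤ ((m*n - i : ℕ) : ℝ) * (Cδ - 2*δ₄) :=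
        mul_le_mul hkr hCd1 (by norm_num) (Nat.cast_nonneg _)
      have hc1 : ((m₀ + 1 : ℕ) : ℝ) = (m₀ : ℝ) + 1 := by push_cast; ring
      rw [hc1, mul_one] at hmul
      linarith
    have hq2 : 0 ≤ q i + 2*δ₄ + 2*δ := by
      have := qF_nonneg x₀ gs n i
      rw [← hqdef] at this
      linarith
    have hdeepP : R + 2*δ < dist (βg tm) Om' := by
      have htri := dist_triangle Om' (βg tm) w
      rw [dist_comm (βg tm) Om']
      have hd : dist (βg tm) w = dist w (βg tm) := dist_comm _ _
      linarith
    have hdeepQ : R + δ < dist (βg tm) Om := by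
      have htri := dist_triangle w (βg tm) Om
      linarith
    -- captures at both ends
    obtain ⟨a', ha'⟩ := capN m
    obtain ⟨b', hb'⟩ := capP m
    obtain ⟨γ', hγ'⟩ := geo (α a') (α b')
    obtain ⟨t', ht'm, ht'd⟩ := quad_deep_point geo slim hβ hγ' ha' hb' htmm hdeepP hdeepQ
    obtain ⟨s, hs⟩ := geodesic_near_qg_pair hδ0 hc geo slim hαqg a' b' hγ' ht'm
    refine ⟨α s, ⟨s, rfl⟩, ?_⟩
    rw [hpt]
    have htri4 := dist_triangle4 (α s) (γ' t') (βg tm) w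
    rw [dist_comm (α s) (γ' t'), dist_comm (γ' t') (βg tm), dist_comm (βg tm) w] at htri4
    have hqeqn : q i = gp x₀ ((gs i)⁻¹ • x₀) (gs (i + 1) • x₀) := by
      rw [hqdef]; exact qF_eq_Qn x₀ gs n hn hgs0 hgs1 i hi1 hin
    have hQp0 : 0 ≤ gp x₀ ((gs (i - 1))⁻¹ • x₀) (gs i • x₀) := gp_nonneg _ _ _
    have hCδ' : Cδ = 1000 * (δ + 1) := hCδdef
    have hδ₄' : δ₄ = 3 * δ := hδ₄def
    have hc' : c = 100 * (δ + 1) := hcdef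
    linarith
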